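/- Let n ≥ 1 and let A be the n×n prefix-sum matrix. The infimum over all factorizations A = BC (B, C real n×n matrices, C invertible) of ‖B‖_F · ‖Ce‖₂ equals ‖Ae‖₂ = √(n(n+1)(2n+1)/6); that is, for every ε > 0 there exist an invertible real n×n matrix C and B = AC^{-1} such that ‖B‖_F · ‖Ce‖₂ < ‖Ae‖₂ + ε, and no factorization achieves a smaller value than ‖Ae‖₂. (A minimizing sequence is given by C_μ = D_μ^{-1} R A and B_μ = Rᵀ D_μ, where R is a rotation with R(Ae) = ‖Ae‖₂·e₁, D_μ = diag(1, μ, …, μ), and μ → 0.) -/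

import Mathlib

open Finset

/-- Euclidean norm of a vector in `ℝⁿ`. -/
noncomputable def norm2 {n : ℕ} (v : Fin n → ℝ) : ℝ := Real.sqrt (∑ i, v i ^ 2)

/-- Frobenius norm of a square matrix. -/
noncomputable def frob {n : ℕ} (B : Matrix (Fin n) (Fin n) ℝ) : ℝ :=
  Real.sqrt (∑ i, ∑ j, B i j ^ 2)

/-- `‖B‖_{2→∞}`: the maximum Euclidean norm of a row of `B`. -/
noncomputable def rowMax {n : ℕ} (B : Matrix (Fin n) (Fin n) ℝ) : ℝ :=
  ⨆ i : Fin n, norm2 (fun j => B i j)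

/-- The `n × n` prefix-sum matrix: lower triangular, all entries on or below the diagonal are 1. -/
def Amat (n : ℕ) : Matrix (Fin n) (Fin n) ℝ :=
  fun i j => if (j : ℕ) ≤ (i : ℕ) then 1 else 0

/-- The DP-λCGD strategy matrix `C_λ`: lower triangular Toeplitz with `(C_λ)_{ij} = λ^{i-j}`. -/
noncomputable def Cmat (n : ℕ) (l : ℝ) : Matrix (Fin n) (Fin n) ℝ :=
  fun i j => if (j : ℕ) ≤ (i : ℕ) then l ^ ((i : ℕ) - (j : ℕ)) else 0

/-- The inverse `C_λ⁻¹`: ones on the diagonal, `-λ` on the first subdiagonal, zero elsewhere. -/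
noncomputable def Cinvmat (n : ℕ) (l : ℝ) : Matrix (Fin n) (Fin n) ℝ :=
  fun i j => if (i : ℕ) = (j : ℕ) then 1 else if (i : ℕ) = (j : ℕ) + 1 then -l else 0

/-- `sens_{k,b}(C)`: Euclidean norm of `∑_{j=0}^{k-1} C_{:,jb+1}` (columns 1-indexed, so the
column of 1-based index `j*b + 1` is the column of `Fin`-index `j*b`). -/
noncomputable def sens (n k b : ℕ) (C : Matrix (Fin n) (Fin n) ℝ) : ℝ :=
  norm2 (fun i => ∑ j ∈ Finset.range k, if h : j * b < n then C i ⟨j * b, h⟩ else 0)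

/-- `d_j`: Euclidean norm of the `j`-th column of `C_λ`. -/
noncomputable def dcol (n : ℕ) (l : ℝ) (j : Fin n) : ℝ :=
  norm2 (fun i => Cmat n l i j)

/-- The column-normalized DP-λCGD strategy matrix `C̃ = C_λ D⁻¹`. -/
noncomputable def Ctil (n : ℕ) (l : ℝ) : Matrix (Fin n) (Fin n) ℝ :=
  Cmat n l * (Matrix.diagonal (dcol n l))⁻¹

/-- the infimum of ‖B‖_F·‖Ce‖₂ over factorizations A = BC (C invertible,
B = A C⁻¹) equals ‖Ae‖₂ = √(n(n+1)(2n+1)/6): no factorization achieves a smaller value,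
and for every ε > 0 some factorization comes within ε of it. -/
lemma aux_sum_sq (n : ℕ) : ∑ i ∈ Finset.range n, ((i:ℝ)+1)^2
    = (n:ℝ)*((n:ℝ)+1)*(2*(n:ℝ)+1)/6 := by
  induction n with
  | zero => simp
  | succ m ih => rw [Finset.sum_range_succ, ih]; push_cast; ring

lemma aux_mulVec_le {n : ℕ} (M : Matrix (Fin n) (Fin n) ℝ) (x : Fin n → ℝ) :
    norm2 (M.mulVec x) ≤ frob M * norm2 x := by
  unfold norm2 frob
  rw [← Real.sqrt_mul (by positivity)]
  apply Real.sqrt_le_sqrt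
  rw [Finset.sum_mul]
  apply Finset.sum_le_sum
  intro i _
  simpa [Matrix.mulVec, dotProduct] using
    Finset.sum_mul_sq_le_sq_mul_sq Finset.univ (fun j => M i j) x

lemma aux_Ae (n : ℕ) : (Amat n).mulVec (fun _ => (1:ℝ)) = fun i : Fin n => ((i:ℕ):ℝ)+1 := by
  funext i
  simp only [Amat, Matrix.mulVec, dotProduct, mul_one]
  rw [Fin.sum_univ_eq_sum_range (fun j => if j ≤ (i:ℕ) then (1:ℝ) else 0)]
  have : ∀ j, (j ≤ (i:ℕ)) ↔ j ∈ Finset.range ((i:ℕ)+1) := by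
    intro j; simp [Nat.lt_succ_iff]
  simp only [this]
  rw [Finset.sum_ite_mem]
  have : Finset.range n ∩ Finset.range ((i:ℕ)+1) = Finset.range ((i:ℕ)+1) := by
    apply Finset.inter_eq_right.mpr
    intro x hx
    simp only [Finset.mem_range] at *
    omega
  rw [this]
  simp

lemma aux_sqrt_add {a b : ℝ} (ha : 0 ≤ a) (hb : 0 ≤ b) :
    Real.sqrt (a+b) ≤ Real.sqrt a + Real.sqrt b := by
  rw [show a + b = a + b from rfl]
  have h : a + b ≤ (Real.sqrt a + Real.sqrt b)^2 := by
    rw [add_sq, Real.sq_sqrt ha, Real.sq_sqrt hb]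
    nlinarith [Real.sqrt_nonneg a, Real.sqrt_nonneg b]
  calc Real.sqrt (a+b) ≤ Real.sqrt ((Real.sqrt a + Real.sqrt b)^2) := Real.sqrt_le_sqrt h
    _ = _ := Real.sqrt_sq (by positivity)

theorem stmt_9 (n : ℕ) (hn : 1 ≤ n) :
    (∀ B C : Matrix (Fin n) (Fin n) ℝ, B * C = Amat n →
      norm2 ((Amat n).mulVec (fun _ => 1)) ≤ frob B * norm2 (C.mulVec (fun _ => 1))) ∧
    (∀ ε : ℝ, 0 < ε → ∃ C : Matrix (Fin n) (Fin n) ℝ, IsUnit C ∧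
      frob (Amat n * C⁻¹) * norm2 (C.mulVec (fun _ => 1)) <
        norm2 ((Amat n).mulVec (fun _ => 1)) + ε) ∧
    norm2 ((Amat n).mulVec (fun _ => 1)) =
      Real.sqrt ((n : ℝ) * ((n : ℝ) + 1) * (2 * (n : ℝ) + 1) / 6) := by
  have hAe := aux_Ae n
  set v : Fin n → ℝ := fun i => ((i:ℕ):ℝ)+1 with hv
  have hS : norm2 ((Amat n).mulVec fun _ => 1) = Real.sqrt (∑ i : Fin n, v i ^ 2) := by
    rw [hAe]; rfl
  refine ⟨?_, ?_, ?_⟩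
  · intro B C hBC
    have h1 : (Amat n).mulVec (fun _ => 1) = B.mulVec (C.mulVec fun _ => 1) := by
      rw [Matrix.mulVec_mulVec, hBC]
    rw [h1]
    exact aux_mulVec_le B _
  · intro ε hε
    have hz : (0:ℕ) < n := hn
    set z : Fin n := ⟨0, hz⟩ with hzdef
    set μ : ℝ := ε / (Real.sqrt n + 1) with hμ
    have hsn : (0:ℝ) ≤ Real.sqrt n := Real.sqrt_nonneg _
    have hμpos : 0 < μ := div_pos hε (by positivity)
    set N : Matrix (Fin n) (Fin n) ℝ :=
      fun i j => if (j:ℕ) = 0 then v i else if i = j then 1 else 0 with hN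
    set d : Fin n → ℝ := fun j => if (j:ℕ) = 0 then 1 else μ with hd
    have hdetA : IsUnit (Amat n).det := by
      rw [Matrix.det_of_lowerTriangular (Amat n) ?_]
      · have : ∀ i : Fin n, Amat n i i = 1 := fun i => by simp [Amat]
        simp [this]
      · intro i j hij
        have hij' : i < j := OrderDual.toDual_lt_toDual.mp hij
        simp only [Amat, ite_eq_right_iff]
        intro h; exact absurd h (by exact_mod_cast not_le.mpr hij')
    have hdetN : IsUnit N.det := by
      rw [Matrix.det_of_lowerTriangular N ?_]
      · have : ∀ i : Fin n, N i i = 1 := by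
          intro i
          by_cases hi : (i:ℕ) = 0
          · simp [hN, hv, hi]
          · simp [hN, hi]
        simp [this]
      · intro i j hij
        have hij' : i < j := OrderDual.toDual_lt_toDual.mp hij
        have h0 : ¬ (j:ℕ) = 0 := by
          have : (i:ℕ) < (j:ℕ) := hij'
          omega
        have h1 : ¬ i = j := ne_of_lt hij'
        simp [hN, h0, h1]
    have hdj : ∀ j : Fin n, d j ≠ 0 := by
      intro j
      by_cases hj : (j:ℕ) = 0
      · simp [hd, hj]
      · simp [hd, hj]; exact ne_of_gt hμpos
    have hdetD : IsUnit (Matrix.diagonal d).det := by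
      rw [Matrix.det_diagonal]
      exact isUnit_iff_ne_zero.mpr (Finset.prod_ne_zero_iff.mpr fun j _ => hdj j)
    refine ⟨(Matrix.diagonal d)⁻¹ * N⁻¹ * Amat n, ?_, ?_⟩
    · rw [Matrix.isUnit_iff_isUnit_det, Matrix.det_mul, Matrix.det_mul,
        Matrix.det_nonsing_inv, Matrix.det_nonsing_inv, Ring.inverse_eq_inv,
        Ring.inverse_eq_inv]
      exact (hdetD.inv.mul hdetN.inv).mul hdetA
    · have hinv : Amat n * ((Matrix.diagonal d)⁻¹ * N⁻¹ * Amat n)⁻¹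
          = N * Matrix.diagonal d := by
        rw [Matrix.mul_inv_rev, Matrix.mul_inv_rev,
          Matrix.nonsing_inv_nonsing_inv _ hdetN, Matrix.nonsing_inv_nonsing_inv _ hdetD,
          Matrix.mul_nonsing_inv_cancel_left _ _ hdetA]
      rw [hinv]
      -- compute C e = e₁
      have he1 : ((Matrix.diagonal d)⁻¹ * N⁻¹ * Amat n).mulVec (fun _ => 1)
          = fun i : Fin n => if (i:ℕ) = 0 then (1:ℝ) else 0 := by
        rw [← Matrix.mulVec_mulVec, ← Matrix.mulVec_mulVec, hAe]
        have hNe1 : N.mulVec (fun i : Fin n => if (i:ℕ) = 0 then (1:ℝ) else 0) = v := by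
          funext i
          simp only [Matrix.mulVec, dotProduct]
          rw [Finset.sum_eq_single z]
          · simp [hN, hzdef]
          · intro b _ hb
            have : ¬ (b:ℕ) = 0 := fun h => hb (Fin.ext h)
            simp [this]
          · intro h; exact absurd (Finset.mem_univ z) h
        have hNinv : N⁻¹.mulVec v = (fun i : Fin n => if (i:ℕ) = 0 then (1:ℝ) else 0) := by
          rw [← hNe1, Matrix.mulVec_mulVec, Matrix.nonsing_inv_mul _ hdetN, Matrix.one_mulVec]
        rw [hNinv]
        have hDinv : (Matrix.diagonal d)⁻¹ = Matrix.diagonal (fun j => (d j)⁻¹) := by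
          apply Matrix.inv_eq_right_inv
          rw [Matrix.diagonal_mul_diagonal]
          have h1 : (fun j => d j * (d j)⁻¹) = fun _ => (1:ℝ) :=
            funext fun j => mul_inv_cancel₀ (hdj j)
          rw [h1, Matrix.diagonal_one]
        rw [hDinv]
        funext i
        simp only [Matrix.mulVec_diagonal]
        by_cases hi : (i:ℕ) = 0
        · simp [hd, hi]
        · simp [hi]
      rw [he1]
      have hne1 : norm2 (fun i : Fin n => if (i:ℕ) = 0 then (1:ℝ) else 0) = 1 := by
        unfold norm2
        rw [Finset.sum_eq_single z]
        · simp [hzdef]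
        · intro b _ hb
          have : ¬ (b:ℕ) = 0 := fun h => hb (Fin.ext h)
          simp [this]
        · intro h; exact absurd (Finset.mem_univ z) h
      rw [hne1, mul_one, hS]
      -- frobenius bound
      have hrow : ∀ i : Fin n, ∑ j : Fin n, (N * Matrix.diagonal d) i j ^ 2
          ≤ v i ^ 2 + μ ^ 2 := by
        intro i
        have hb : ∀ j : Fin n, (N * Matrix.diagonal d) i j ^ 2
            ≤ (if j = z then v i ^ 2 else 0) + (if j = i then μ ^ 2 else 0) := by
          intro j
          rw [Matrix.mul_diagonal]
          by_cases hj : (j:ℕ) = 0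
          · have hjz : j = z := Fin.ext hj
            have : ¬ ((z:Fin n) = i) ∨ True := Or.inr trivial
            simp only [hN, hd, hj, if_pos, hjz, if_true, mul_one, one_pow]
            have hz0 : ((z:Fin n):ℕ) = 0 := rfl
            simp only [hz0, if_true, mul_one]
            have : (0:ℝ) ≤ (if z = i then μ ^ 2 else 0) := by positivity
            nlinarith
          · have hjz : ¬ j = z := fun h => hj (by rw [h])
            simp only [hN, hd, hj, if_neg, hjz, if_false]
            by_cases hij : i = j
            · simp [hij, hjz]
            · have : ¬ j = i := fun h => hij h.symm
              simp [hij, this]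
        calc ∑ j : Fin n, (N * Matrix.diagonal d) i j ^ 2
            ≤ ∑ j : Fin n, ((if j = z then v i ^ 2 else 0) + (if j = i then μ ^ 2 else 0)) :=
              Finset.sum_le_sum fun j _ => hb j
          _ = v i ^ 2 + μ ^ 2 := by
              rw [Finset.sum_add_distrib, Finset.sum_ite_eq' Finset.univ z,
                Finset.sum_ite_eq' Finset.univ i]
              simp
      have hfr : frob (N * Matrix.diagonal d)
          ≤ Real.sqrt (∑ i : Fin n, v i ^ 2) + Real.sqrt n * μ := by
        unfold frob
        calc Real.sqrt (∑ i : Fin n, ∑ j : Fin n, (N * Matrix.diagonal d) i j ^ 2)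
            ≤ Real.sqrt (∑ i : Fin n, (v i ^ 2 + μ ^ 2)) :=
              Real.sqrt_le_sqrt (Finset.sum_le_sum fun i _ => hrow i)
          _ = Real.sqrt ((∑ i : Fin n, v i ^ 2) + n * μ ^ 2) := by
              rw [Finset.sum_add_distrib]
              simp [Finset.card_univ, mul_comm]
          _ ≤ Real.sqrt (∑ i : Fin n, v i ^ 2) + Real.sqrt ((n:ℝ) * μ ^ 2) :=
              aux_sqrt_add (by positivity) (by positivity)
          _ = Real.sqrt (∑ i : Fin n, v i ^ 2) + Real.sqrt n * μ := by
              rw [Real.sqrt_mul (by positivity), Real.sqrt_sq hμpos.le]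
      have hlt : Real.sqrt n * μ < ε := by
        have hpos : (0:ℝ) < Real.sqrt n + 1 := by positivity
        calc Real.sqrt n * μ = ε * (Real.sqrt n / (Real.sqrt n + 1)) := by
              rw [hμ]; ring
          _ < ε * 1 := mul_lt_mul_of_pos_left ((div_lt_one hpos).mpr (by linarith)) hε
          _ = ε := mul_one ε
      calc frob (N * Matrix.diagonal d)
          ≤ Real.sqrt (∑ i : Fin n, v i ^ 2) + Real.sqrt n * μ := hfr
        _ < Real.sqrt (∑ i : Fin n, v i ^ 2) + ε := by linarith
  · rw [hS]
    congr 1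
    rw [Fin.sum_univ_eq_sum_range (fun i => ((i:ℝ)+1)^2)]
    exact aux_sum_sq n
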